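/- Let B be a unital C*-algebra and let F, F' ∈ B be self-adjoint elements with F² = 1 and F'² = 1, and suppose that FF' + F'F ≥ λ·1 for some real number λ > −2. Then F and F' are homotopic through invertible elements: there exists a norm-continuous path γ : [0,1] → B with γ(0) = F, γ(1) = F', and γ(t) invertible for every t ∈ [0,1] (one may take γ(t) = cos(tπ/2)·F + sin(tπ/2)·F'). -/

import Mathlib

/-- **Lemma 2.13 (existence form).** In a unital C*-algebra `B`, if `F, F'` are self-adjoint
with `F² = 1`, `F'² = 1` and the anticommutator `F*F' + F'*F` is bounded below by `λ·1` for
some real `λ > -2`, then `F` and `F'` are homotopic through invertible elements of `B`. -/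
theorem homotopic_through_invertibles_of_anticommutator_bounded_below
    {B : Type*} [CStarAlgebra B] [PartialOrder B] [StarOrderedRing B]
    (F F' : B) (hF : IsSelfAdjoint F) (hF' : IsSelfAdjoint F')
    (hF2 : F ^ 2 = 1) (hF'2 : F' ^ 2 = 1)
    (lam : ℝ) (hlam : -2 < lam)
    (hanti : lam • (1 : B) ≤ F * F' + F' * F) :
    ∃ γ : ℝ → B, Continuous γ ∧ γ 0 = F ∧ γ 1 = F' ∧
      ∀ t ∈ Set.Icc (0 : ℝ) 1, IsUnit (γ t) := by
  refine ⟨fun t => Real.cos (t * (Real.pi/2)) • F + Real.sin (t * (Real.pi/2)) • F', ?_, ?_, ?_, ?_⟩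
  · fun_prop
  · simp
  · norm_num [Real.cos_pi_div_two, Real.sin_pi_div_two]
  · intro t ht
    obtain ⟨ht0, ht1⟩ := ht
    set c := Real.cos (t * (Real.pi/2)) with hc
    set s := Real.sin (t * (Real.pi/2)) with hs
    have hθ0 : 0 ≤ t * (Real.pi/2) := by positivity
    have hθ1 : t * (Real.pi/2) ≤ Real.pi/2 := by
      have : (0:ℝ) < Real.pi/2 := by positivity
      nlinarith
    have hc0 : 0 ≤ c := Real.cos_nonneg_of_mem_Icc ⟨by linarith [Real.pi_pos], hθ1⟩
    have hs0 : 0 ≤ s := Real.sin_nonneg_of_nonneg_of_le_pi hθ0 (by linarith [Real.pi_pos])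
    have hcs1 : c^2 + s^2 = 1 := by
      rw [hc, hs]; rw [add_comm]; exact Real.sin_sq_add_cos_sq _
    have hcs_half : c * s ≤ 1/2 := by nlinarith [sq_nonneg (c - s)]
    have hcs_nn : 0 ≤ c * s := mul_nonneg hc0 hs0
    set a := c • F + s • F' with ha
    -- compute a * a
    have hsq : a * a = (1 : B) + (c*s) • (F * F' + F' * F) := by
      have hFF : F * F = 1 := by rw [← sq]; exact hF2
      have hF'F' : F' * F' = 1 := by rw [← sq]; exact hF'2
      rw [ha]
      rw [mul_add, add_mul, add_mul, smul_mul_assoc, smul_mul_assoc, smul_mul_assoc,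
        smul_mul_assoc, mul_smul_comm, mul_smul_comm, mul_smul_comm, mul_smul_comm,
        hFF, hF'F', smul_smul, smul_smul, smul_smul, smul_smul]
      have h1 : (c*c) • (1:B) + (s*s) • (1:B) = (1:B) := by
        rw [← add_smul]
        have : c*c + s*s = 1 := by nlinarith
        rw [this, one_smul]
      have : (s*c) = (c*s) := by ring
      rw [this]
      conv_rhs => rw [← h1]
      module
    set ε : ℝ := min 1 (1 + lam/2) with hε
    have hε0 : 0 < ε := by
      apply lt_min one_pos; linarith
    -- ε • 1 ≤ a * a
    have key : ε • (1:B) ≤ a * a := by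
      rw [hsq]
      have h1 : (c*s*lam) • (1:B) ≤ (c*s) • (F * F' + F' * F) := by
        have := smul_le_smul_of_nonneg_left hanti hcs_nn
        rwa [smul_smul] at this
      have h2 : ε • (1:B) ≤ (1:B) + (c*s*lam) • (1:B) := by
        have hscal : ε ≤ 1 + c*s*lam := by
          rcases le_or_gt 0 lam with h | h
          · have : 0 ≤ c*s*lam := by positivity
            have := min_le_left (1:ℝ) (1 + lam/2)
            linarith
          · have : c*s*lam ≥ (1/2)*lam := by nlinarith
            have := min_le_right (1:ℝ) (1 + lam/2)
            linarith
        calc ε • (1:B) ≤ (1 + c*s*lam) • (1:B) := by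
              rw [← sub_nonneg, ← sub_smul]
              exact smul_nonneg (by linarith) zero_le_one
          _ = (1:B) + (c*s*lam) • (1:B) := by rw [add_smul, one_smul]
      calc ε • (1:B) ≤ (1:B) + (c*s*lam) • (1:B) := h2
        _ ≤ (1:B) + (c*s) • (F * F' + F' * F) := by exact add_le_add_right h1 1
    -- a*a is a unit
    have hunit_sq : IsUnit (a * a) := by
      exact CStarAlgebra.isUnit_of_le _ key (IsStrictlyPositive.smul hε0 isStrictlyPositive_one)
    -- hence a is a unit
    obtain ⟨u, hu⟩ := hunit_sq
    have hcomm : Commute a ↑u := by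
      rw [hu]; exact (Commute.refl a).mul_right (Commute.refl a)
    have hcomm' : Commute a ↑u⁻¹ := hcomm.units_inv_right
    refine isUnit_iff_exists.mpr ⟨↑u⁻¹ * a, ?_, ?_⟩
    · calc a * (↑u⁻¹ * a) = (a * ↑u⁻¹) * a := (mul_assoc _ _ _).symm
        _ = (↑u⁻¹ * a) * a := by rw [hcomm'.eq]
        _ = ↑u⁻¹ * (a * a) := mul_assoc _ _ _
        _ = ↑u⁻¹ * ↑u := by rw [← hu]
        _ = 1 := u.inv_mul
    · calc (↑u⁻¹ * a) * a = ↑u⁻¹ * (a * a) := mul_assoc _ _ _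
        _ = ↑u⁻¹ * ↑u := by rw [← hu]
        _ = 1 := u.inv_mul
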